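/- For the Magnus representation β of the free group Fₙ, every element w of the k-th derived subgroup Fₙ^{(k)} satisfies β(w) − 1 ∈ Δ^{2^k}. -/

import Mathlib

/-- The relation identifying the squares of the generators with `0`. -/
def MagnusRel (n : ℕ) : FreeAlgebra ℤ (Fin n) → FreeAlgebra ℤ (Fin n) → Prop :=
  fun a b => ∃ j : Fin n, a = FreeAlgebra.ι ℤ j * FreeAlgebra.ι ℤ j ∧ b = 0

/-- The ring `P = ℤ⟨x₁,…,xₙ⟩ / (x₁², …, xₙ²)`.  (Since `xⱼ² = 0`, the Magnus
representation `aⱼ ↦ 1 + xⱼ` takes values in this quotient; it is the image of the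
corresponding power series ring `ℤ⟨⟨x₁,…,xₙ⟩⟩/(xⱼ²)` relevant to the statements below.) -/
abbrev MagnusRing (n : ℕ) := RingQuot (MagnusRel n)

/-- The indeterminate `xⱼ` in `MagnusRing n`. -/
noncomputable def magnusX {n : ℕ} (j : Fin n) : MagnusRing n :=
  RingQuot.mkRingHom (MagnusRel n) (FreeAlgebra.ι ℤ j)

/-- The augmentation `ρ : P → ℤ` sending each `xⱼ` to `0`. -/
noncomputable def magnusAug (n : ℕ) : MagnusRing n →+* ℤ :=
  RingQuot.lift ⟨((FreeAlgebra.lift ℤ (fun _ : Fin n => (0 : ℤ))) : _).toRingHom, by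
    rintro a b ⟨j, rfl, rfl⟩
    simp⟩

/-- The fundamental ideal `Δ = ker ρ`, viewed as a `ℤ`-submodule of `P` (so that its
powers `Δᵏ` are the usual powers of the two-sided ideal `Δ`). -/
noncomputable def magnusDelta (n : ℕ) : Submodule ℤ (MagnusRing n) :=
  (RingHom.ker (magnusAug n)).restrictScalars ℤ

lemma mem_magnusDelta {n : ℕ} {x : MagnusRing n} :
    x ∈ magnusDelta n ↔ magnusAug n x = 0 := Iff.rfl

lemma magnusDelta_mul_mem {n : ℕ} {x : MagnusRing n} (r : MagnusRing n)
    (hx : x ∈ magnusDelta n) : r * x ∈ magnusDelta n := by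
  rw [mem_magnusDelta, map_mul, hx, mul_zero]

lemma magnusDelta_mem_mul {n : ℕ} {x : MagnusRing n} (r : MagnusRing n)
    (hx : x ∈ magnusDelta n) : x * r ∈ magnusDelta n := by
  rw [mem_magnusDelta, map_mul, hx, zero_mul]

lemma magnusDelta_pow_mul_mem {n : ℕ} {m : ℕ} (hm : 1 ≤ m) (r : MagnusRing n)
    {x : MagnusRing n} (hx : x ∈ magnusDelta n ^ m) : r * x ∈ magnusDelta n ^ m := by
  obtain ⟨m, rfl⟩ := Nat.exists_eq_add_of_le hm
  rw [add_comm, show magnusDelta n ^ (m + 1) = magnusDelta n * magnusDelta n ^ m from by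
    rcases m with _ | m
    · rw [Submodule.pow_one, Submodule.pow_zero]; exact (Submodule.mul_one _).symm
    · exact Submodule.pow_succ' _ (Nat.succ_ne_zero m)] at *
  refine Submodule.mul_induction_on hx (fun d hd y hy => ?_) (fun a b ha hb => ?_)
  · rw [← mul_assoc]
    exact Submodule.mul_mem_mul (magnusDelta_mul_mem r hd) hy
  · rw [mul_add]; exact add_mem ha hb

lemma magnusDelta_pow_mem_mul {n : ℕ} {m : ℕ} (hm : 1 ≤ m) (r : MagnusRing n)
    {x : MagnusRing n} (hx : x ∈ magnusDelta n ^ m) : x * r ∈ magnusDelta n ^ m := by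
  obtain ⟨m, rfl⟩ := Nat.exists_eq_add_of_le hm
  rw [add_comm, Submodule.pow_succ] at *
  refine Submodule.mul_induction_on hx (fun y hy d hd => ?_) (fun a b ha hb => ?_)
  · rw [mul_assoc]
    exact Submodule.mul_mem_mul hy (magnusDelta_mem_mul r hd)
  · rw [add_mul]; exact add_mem ha hb

noncomputable def magnusSubgroup {n : ℕ} (β : FreeGroup (Fin n) →* (MagnusRing n)ˣ)
    (m : ℕ) (hm : 1 ≤ m) : Subgroup (FreeGroup (Fin n)) where
  carrier := {w | ((β w : (MagnusRing n)ˣ) : MagnusRing n) - 1 ∈ magnusDelta n ^ m}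
  one_mem' := by simp
  mul_mem' := by
    intro a b ha hb
    simp only [Set.mem_setOf_eq, map_mul, Units.val_mul] at *
    have key : (β a : MagnusRing n) * (β b : MagnusRing n) - 1 =
        ((β a : MagnusRing n) - 1) * ((β b : MagnusRing n) - 1)
          + ((β a : MagnusRing n) - 1) + ((β b : MagnusRing n) - 1) := by simp only [mul_sub, sub_mul, mul_one, one_mul]; abel
    rw [key]
    exact add_mem (add_mem (magnusDelta_pow_mul_mem hm _ hb) ha) hb
  inv_mem' := by
    intro a ha
    simp only [Set.mem_setOf_eq, map_inv] at *
    have key : (((β a)⁻¹ : (MagnusRing n)ˣ) : MagnusRing n) - 1 =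
        -((((β a)⁻¹ : (MagnusRing n)ˣ) : MagnusRing n) * ((β a : MagnusRing n) - 1)) := by
      have h : (((β a)⁻¹ : (MagnusRing n)ˣ) : MagnusRing n) * (β a : MagnusRing n) = 1 := by
        rw [← Units.val_mul, inv_mul_cancel, Units.val_one]
      rw [mul_sub, h, mul_one, neg_sub]
    rw [key]
    exact neg_mem (magnusDelta_pow_mul_mem hm _ ha)

open scoped commutatorElement in
/-- For the Magnus representation `β`, every element `w` of the `k`-th derived subgroup
`Fₙ^{(k)}` satisfies `β(w) − 1 ∈ Δ^{2^k}`. -/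
theorem magnus_derivedSeries_mem {n : ℕ} (β : FreeGroup (Fin n) →* (MagnusRing n)ˣ)
    (hβ : ∀ j : Fin n,
      ((β (FreeGroup.of j) : (MagnusRing n)ˣ) : MagnusRing n) = 1 + magnusX j)
    (k : ℕ) (w : FreeGroup (Fin n)) (hw : w ∈ derivedSeries (FreeGroup (Fin n)) k) :
    ((β w : (MagnusRing n)ˣ) : MagnusRing n) - 1 ∈ magnusDelta n ^ (2 ^ k) := by
  have hle : ∀ k : ℕ, derivedSeries (FreeGroup (Fin n)) k ≤
      magnusSubgroup β (2 ^ k) (Nat.one_le_two_pow) := by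
    intro k
    induction k with
    | zero =>
      rw [derivedSeries_zero]
      rw [← FreeGroup.closure_range_of (Fin n), Subgroup.closure_le]
      rintro _ ⟨j, rfl⟩
      show _ ∈ magnusDelta n ^ (2 ^ 0)
      rw [pow_zero, Submodule.pow_one, hβ j, add_sub_cancel_left, mem_magnusDelta]
      simp [magnusX, magnusAug, RingQuot.lift_mkRingHom_apply]
    | succ k ih =>
      rw [derivedSeries_succ]
      rw [Subgroup.commutator_le]
      intro g hg h hh
      have hg' := ih hg
      have hh' := ih hh
      show ((β ⁅g, h⁆ : (MagnusRing n)ˣ) : MagnusRing n) - 1 ∈ magnusDelta n ^ (2 ^ (k+1))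
      rw [commutatorElement_def]
      set u := β g
      set v := β h
      simp only [map_mul, map_inv, Units.val_mul]
      have huu : (u : MagnusRing n) * (u⁻¹ : (MagnusRing n)ˣ) = 1 := by
        rw [← Units.val_mul, mul_inv_cancel, Units.val_one]
      have hvv : (v : MagnusRing n) * (v⁻¹ : (MagnusRing n)ˣ) = 1 := by
        rw [← Units.val_mul, mul_inv_cancel, Units.val_one]
      have key : (u : MagnusRing n) * v * (u⁻¹ : (MagnusRing n)ˣ) * (v⁻¹ : (MagnusRing n)ˣ) - 1 =
          (((u : MagnusRing n) - 1) * ((v : MagnusRing n) - 1)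
            - ((v : MagnusRing n) - 1) * ((u : MagnusRing n) - 1))
            * ((u⁻¹ : (MagnusRing n)ˣ) * (v⁻¹ : (MagnusRing n)ˣ) : MagnusRing n) := by
        have e1 : ((u : MagnusRing n) - 1) * ((v : MagnusRing n) - 1)
            - ((v : MagnusRing n) - 1) * ((u : MagnusRing n) - 1)
            = (u : MagnusRing n) * v - (v : MagnusRing n) * u := by simp only [mul_sub, sub_mul, mul_one, one_mul]; abel
        rw [e1, sub_mul]
        have e2 : (v : MagnusRing n) * u * ((u⁻¹ : (MagnusRing n)ˣ) * (v⁻¹ : (MagnusRing n)ˣ) : MagnusRing n) = 1 := by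
          rw [mul_assoc, ← mul_assoc (u : MagnusRing n), huu, one_mul, hvv]
        rw [e2]
        simp [mul_assoc]
      rw [key]
      apply magnusDelta_pow_mem_mul Nat.one_le_two_pow
      have hprod : ∀ a b : MagnusRing n, a ∈ magnusDelta n ^ (2 ^ k) →
          b ∈ magnusDelta n ^ (2 ^ k) → a * b ∈ magnusDelta n ^ (2 ^ (k+1)) := by
        intro a b ha hb
        have : magnusDelta n ^ (2 ^ (k+1)) = magnusDelta n ^ (2 ^ k) * magnusDelta n ^ (2 ^ k) := by
          rw [pow_succ, mul_two, Submodule.pow_add (h := pow_ne_zero _ two_ne_zero)]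
        rw [this]
        exact Submodule.mul_mem_mul ha hb
      exact sub_mem (hprod _ _ hg' hh') (hprod _ _ hh' hg')
  exact hle k hw
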